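/- Assume equation (4mu′) holds and equation (dkq) holds. Then there exist real constants μ_1, …, μ_{2g} such that for all t ∈ ℝ^g and all real ξ ≠ 0: 𝐮'(ξ)² + 2𝐮''(ξ)(2 − 𝐮(ξ)) + 4(ξ⁻¹ + u_1)(2 − 𝐮(ξ))² = 16ξ⁻¹ + 4∑_{i=1}^{2g} μ_i ξ^i. Equivalently, every t-partial derivative ∂_j (j = 1, …, g) of the left-hand side vanishes identically for every fixed ξ ≠ 0. -/

import Mathlib

open scoped BigOperators

/-- Partial derivative `∂_i` (1-based index) on functions of `t : Fin g → ℝ`;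
`∂_i ≡ 0` for `i = 0` or `i > g` (in particular `∂_{g+1} ≡ 0`). -/
noncomputable def pd {g : ℕ} {E : Type*} [NormedAddCommGroup E] [NormedSpace ℝ E]
    (i : ℕ) (f : (Fin g → ℝ) → E) : (Fin g → ℝ) → E :=
  fun t => if h : 1 ≤ i ∧ i ≤ g then
    fderiv ℝ f t (Pi.single (⟨i - 1, by omega⟩ : Fin g) 1) else 0

/-- The generating function `𝐮(ξ) = ∑_{i=1}^g u_i ξ^i`. -/
noncomputable def bfu {g : ℕ} (u : ℕ → (Fin g → ℝ) → ℝ) (ξ : ℝ) :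
    (Fin g → ℝ) → ℝ :=
  fun t => ∑ i ∈ Finset.Icc 1 g, u i t * ξ ^ i

/-- `𝐮'(ξ) = ∑_{i=1}^g u_i' ξ^i` (prime is `∂_x = ∂_1`). -/
noncomputable def bfu1 {g : ℕ} (u : ℕ → (Fin g → ℝ) → ℝ) (ξ : ℝ) :
    (Fin g → ℝ) → ℝ :=
  fun t => ∑ i ∈ Finset.Icc 1 g, pd 1 (u i) t * ξ ^ i

/-- `𝐮''(ξ) = ∑_{i=1}^g u_i'' ξ^i`. -/
noncomputable def bfu2 {g : ℕ} (u : ℕ → (Fin g → ℝ) → ℝ) (ξ : ℝ) :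
    (Fin g → ℝ) → ℝ :=
  fun t => ∑ i ∈ Finset.Icc 1 g, pd 1 (pd 1 (u i)) t * ξ ^ i

/-- `𝐮'''(ξ) = ∑_{i=1}^g u_i''' ξ^i`. -/
noncomputable def bfu3 {g : ℕ} (u : ℕ → (Fin g → ℝ) → ℝ) (ξ : ℝ) :
    (Fin g → ℝ) → ℝ :=
  fun t => ∑ i ∈ Finset.Icc 1 g, pd 1 (pd 1 (pd 1 (u i))) t * ξ ^ i

/-- `D_k(2 − 𝐮(ξ)) = (1/2)(2·ξ^{1−k} + ∑_{i=1}^{k−1} (−u_i) ξ^{i−k+1})`,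
the operator `D_k` applied to the Laurent-type polynomial `2 − 𝐮(ξ)`. -/
noncomputable def DkA {g : ℕ} (u : ℕ → (Fin g → ℝ) → ℝ) (k : ℕ) (ξ : ℝ) :
    (Fin g → ℝ) → ℝ :=
  fun t => (1/2 : ℝ) * (2 * ξ ^ (1 - (k:ℤ))
    + ∑ i ∈ Finset.Icc 1 (k-1), (-(u i t)) * ξ ^ ((i:ℤ) - (k:ℤ) + 1))

/-- `D_k(𝐮'(ξ)) = (1/2)∑_{i=1}^{k−1} u_i' ξ^{i−k+1}`. -/
noncomputable def DkB {g : ℕ} (u : ℕ → (Fin g → ℝ) → ℝ) (k : ℕ) (ξ : ℝ) :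
    (Fin g → ℝ) → ℝ :=
  fun t => (1/2 : ℝ) * ∑ i ∈ Finset.Icc 1 (k-1), pd 1 (u i) t * ξ ^ ((i:ℤ) - (k:ℤ) + 1)

section PD
variable {g : ℕ}

lemma top_le1 : (1 : WithTop ℕ∞) ≤ ((⊤:ℕ∞) : WithTop ℕ∞) := by exact_mod_cast le_top
lemma top_le2 : (2 : WithTop ℕ∞) ≤ ((⊤:ℕ∞) : WithTop ℕ∞) := by
  rw [show (2 : WithTop ℕ∞) = ((2:ℕ∞) : WithTop ℕ∞) from by norm_cast]
  exact WithTop.coe_le_coe.mpr le_top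
lemma top_add1 : ((⊤:ℕ∞) : WithTop ℕ∞) + 1 ≤ ((⊤:ℕ∞) : WithTop ℕ∞) := by exact_mod_cast le_top

lemma pd_invalid {i : ℕ} (h : ¬ (1 ≤ i ∧ i ≤ g)) (f : (Fin g → ℝ) → ℝ) :
    pd i f = fun _ => 0 := by
  funext t; simp [pd, h]

lemma pd_apply {i : ℕ} (hc : 1 ≤ i ∧ i ≤ g) (f : (Fin g → ℝ) → ℝ) (t : Fin g → ℝ) :
    pd i f t = fderiv ℝ f t (Pi.single (⟨i - 1, by omega⟩ : Fin g) 1) := by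
  simp [pd, hc]

lemma pd_eq {i : ℕ} (hc : 1 ≤ i ∧ i ≤ g) (f : (Fin g → ℝ) → ℝ) :
    pd i f = fun t => fderiv ℝ f t (Pi.single (⟨i - 1, by omega⟩ : Fin g) 1) := by
  funext t; exact pd_apply hc f t

lemma contDiff_pd (i : ℕ) {f : (Fin g → ℝ) → ℝ} (hf : ContDiff ℝ (⊤:ℕ∞) f) :
    ContDiff ℝ (⊤:ℕ∞) (pd i f) := by
  by_cases h : 1 ≤ i ∧ i ≤ g
  · rw [pd_eq h]
    exact (hf.fderiv_right (m := (⊤:ℕ∞)) top_add1).clm_apply contDiff_const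
  · rw [pd_invalid h]
    exact contDiff_const

lemma diff_of_cd {f : (Fin g → ℝ) → ℝ} (hf : ContDiff ℝ (⊤:ℕ∞) f) :
    Differentiable ℝ f := hf.differentiable (by simp)

lemma pd_add (i : ℕ) {f h : (Fin g → ℝ) → ℝ} (t : Fin g → ℝ)
    (hf : DifferentiableAt ℝ f t) (hh : DifferentiableAt ℝ h t) :
    pd i (fun s => f s + h s) t = pd i f t + pd i h t := by
  by_cases hc : 1 ≤ i ∧ i ≤ g
  · rw [pd_apply hc, pd_apply hc, pd_apply hc, fderiv_fun_add hf hh]; simp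
  · simp [pd, hc]

lemma pd_sub (i : ℕ) {f h : (Fin g → ℝ) → ℝ} (t : Fin g → ℝ)
    (hf : DifferentiableAt ℝ f t) (hh : DifferentiableAt ℝ h t) :
    pd i (fun s => f s - h s) t = pd i f t - pd i h t := by
  by_cases hc : 1 ≤ i ∧ i ≤ g
  · rw [pd_apply hc, pd_apply hc, pd_apply hc, fderiv_fun_sub hf hh]; simp
  · simp [pd, hc]

lemma pd_const (i : ℕ) (c : ℝ) (t : Fin g → ℝ) :
    pd i (fun _ => c) t = 0 := by
  by_cases hc : 1 ≤ i ∧ i ≤ g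
  · rw [pd_apply hc, fderiv_fun_const]; simp
  · simp [pd, hc]

lemma pd_mul (i : ℕ) {f h : (Fin g → ℝ) → ℝ} (t : Fin g → ℝ)
    (hf : DifferentiableAt ℝ f t) (hh : DifferentiableAt ℝ h t) :
    pd i (fun s => f s * h s) t = f t * pd i h t + h t * pd i f t := by
  by_cases hc : 1 ≤ i ∧ i ≤ g
  · rw [pd_apply hc, pd_apply hc, pd_apply hc, fderiv_fun_mul hf hh]; simp
  · simp [pd, hc]

lemma pd_mul_const (i : ℕ) {f : (Fin g → ℝ) → ℝ} (c : ℝ) (t : Fin g → ℝ)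
    (hf : DifferentiableAt ℝ f t) :
    pd i (fun s => f s * c) t = pd i f t * c := by
  by_cases hc : 1 ≤ i ∧ i ≤ g
  · rw [pd_apply hc, pd_apply hc, fderiv_mul_const hf]; simp [mul_comm]
  · simp [pd, hc]

lemma pd_neg (i : ℕ) {f : (Fin g → ℝ) → ℝ} (t : Fin g → ℝ) :
    pd i (fun s => -(f s)) t = -(pd i f t) := by
  by_cases hc : 1 ≤ i ∧ i ≤ g
  · rw [pd_apply hc, pd_apply hc, fderiv_fun_neg]; simp
  · simp [pd, hc]

lemma pd_sum (i : ℕ) {ι : Type*} (s : Finset ι) (f : ι → (Fin g → ℝ) → ℝ) (t : Fin g → ℝ)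
    (hf : ∀ j ∈ s, DifferentiableAt ℝ (f j) t) :
    pd i (fun x => ∑ j ∈ s, f j x) t = ∑ j ∈ s, pd i (f j) t := by
  by_cases hc : 1 ≤ i ∧ i ≤ g
  · rw [pd_apply hc, fderiv_fun_sum hf]
    rw [ContinuousLinearMap.sum_apply]
    exact Finset.sum_congr rfl fun j hj => (pd_apply hc (f j) t).symm
  · simp [pd, hc]

lemma pd_comm (i j : ℕ) {f : (Fin g → ℝ) → ℝ} (hf : ContDiff ℝ (⊤:ℕ∞) f) (t : Fin g → ℝ) :
    pd i (pd j f) t = pd j (pd i f) t := by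
  by_cases hi : 1 ≤ i ∧ i ≤ g
  · by_cases hj : 1 ≤ j ∧ j ≤ g
    · have hdf : Differentiable ℝ (fderiv ℝ f) :=
        (hf.fderiv_right (m := (⊤:ℕ∞)) top_add1).differentiable (by simp)
      have key : ∀ v w : Fin g → ℝ,
          fderiv ℝ (fun s => fderiv ℝ f s w) t v = fderiv ℝ (fderiv ℝ f) t v w := by
        intro v w
        rw [show (fun s => fderiv ℝ f s w) = fun s => (fderiv ℝ f s) w from rfl,
          fderiv_clm_apply (hdf t) (differentiableAt_const w)]
        simp
      have hsymm : IsSymmSndFDerivAt ℝ f t := (hf.contDiffAt).isSymmSndFDerivAt (by rw [minSmoothness_of_isRCLikeNormedField]; exact top_le2)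
      rw [pd_apply hi, pd_eq hj f, pd_apply hj, pd_eq hi f, key, key, hsymm]
    · rw [pd_invalid hj f, pd_invalid hj (pd i f)]
      exact pd_const i 0 t
  · rw [pd_invalid hi f, pd_invalid hi (pd j f)]
    exact (pd_const j 0 t).symm

end PD

section EXT

lemma poly_zero (N : ℕ) (a : ℕ → ℝ)
    (h : ∀ ξ : ℝ, ξ ≠ 0 → ∑ n ∈ Finset.range N, a n * ξ ^ n = 0) :
    ∀ n, n < N → a n = 0 := by
  intro n hn
  set p : Polynomial ℝ := ∑ m ∈ Finset.range N, Polynomial.C (a m) * Polynomial.X ^ m with hp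
  have heval : ∀ x : ℝ, p.eval x = ∑ m ∈ Finset.range N, a m * x ^ m := by
    intro x; simp [hp, Polynomial.eval_finset_sum]
  have hp0 : p = 0 := by
    apply p.eq_zero_of_infinite_isRoot
    apply Set.Infinite.mono (s := {x : ℝ | x ≠ 0})
    · intro x hx
      simp only [Set.mem_setOf_eq, Polynomial.IsRoot.def, heval]
      exact h x hx
    · have h0 : {x : ℝ | x ≠ 0} = ({0} : Set ℝ)ᶜ := by ext x; simp
      rw [h0]; exact (Set.finite_singleton 0).infinite_compl
  have : p.coeff n = a n := by
    simp only [hp, Polynomial.finset_sum_coeff, Polynomial.coeff_C_mul,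
      Polynomial.coeff_X_pow]
    rw [Finset.sum_congr rfl (fun m _ => by rw [mul_ite, mul_one, mul_zero])]
    simp [Finset.sum_ite_eq, hn]
  rw [hp0] at this
  simpa using this.symm

lemma single_chunk {N m : ℕ} (hm : m < N) (c : ℝ) (ξ : ℝ) :
    c * ξ ^ m = ∑ n ∈ Finset.range N, (if n = m then c else 0) * ξ ^ n := by
  rw [Finset.sum_congr rfl (fun n _ => by rw [ite_mul, zero_mul])]
  rw [Finset.sum_ite_eq' (Finset.range N) m (fun n => c * ξ ^ n)]
  simp [hm]

lemma chunk (N s b : ℕ) (hb : b + s < N) (c : ℕ → ℝ) (ξ : ℝ) :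
    ∑ i ∈ Finset.Icc 1 b, c i * ξ ^ (i + s)
      = ∑ n ∈ Finset.range N, (if 1 + s ≤ n ∧ n ≤ b + s then c (n - s) else 0) * ξ ^ n := by
  have step : ∀ n, (if 1 + s ≤ n ∧ n ≤ b + s then c (n - s) else 0) * ξ ^ n
      = if n ∈ Finset.Icc (1+s) (b+s) then c (n - s) * ξ ^ n else 0 := by
    intro n
    by_cases hn : 1 + s ≤ n ∧ n ≤ b + s
    · rw [if_pos hn, if_pos (Finset.mem_Icc.mpr hn)]
    · rw [if_neg hn, if_neg (fun hmem => hn (Finset.mem_Icc.mp hmem)), zero_mul]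
  rw [Finset.sum_congr rfl (fun n _ => step n), Finset.sum_ite_mem]
  have hsub : Finset.Icc (1+s) (b+s) ⊆ Finset.range N := by
    intro n hn
    rw [Finset.mem_range]
    have := (Finset.mem_Icc.mp hn).2
    omega
  rw [Finset.inter_eq_right.mpr hsub]
  have hmap : Finset.Icc (1+s) (b+s) = (Finset.Icc 1 b).map (addLeftEmbedding s) := by
    rw [Finset.map_add_left_Icc]; congr 1 <;> omega
  rw [hmap, Finset.sum_map]
  apply Finset.sum_congr rfl
  intro i hi
  simp only [addLeftEmbedding_apply]
  have h1 : s + i - s = i := by omega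
  rw [h1, Nat.add_comm s i]

lemma chunk2 (N s b c : ℕ) (h : b + c + s < N) (f h2 : ℕ → ℝ) (ξ : ℝ) :
    ∑ i ∈ Finset.Icc 1 b, ∑ j ∈ Finset.Icc 1 c, f i * h2 j * ξ ^ (i + j + s)
      = ∑ n ∈ Finset.range N,
          (∑ i ∈ Finset.Icc 1 b,
            if 1 + (i + s) ≤ n ∧ n ≤ c + (i + s) then f i * h2 (n - (i + s)) else 0) * ξ ^ n := by
  have inner : ∀ i ∈ Finset.Icc 1 b,
      ∑ j ∈ Finset.Icc 1 c, f i * h2 j * ξ ^ (i + j + s)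
        = ∑ n ∈ Finset.range N,
            (if 1 + (i + s) ≤ n ∧ n ≤ c + (i + s) then f i * h2 (n - (i + s)) else 0) * ξ ^ n := by
    intro i hi
    have hib : i ≤ b := (Finset.mem_Icc.mp hi).2
    have := chunk N (i + s) c (by omega) (fun j => f i * h2 j) ξ
    rw [← this]
    apply Finset.sum_congr rfl
    intro j _
    have : i + j + s = j + (i + s) := by omega
    rw [this]
  rw [Finset.sum_congr rfl inner, Finset.sum_comm]
  apply Finset.sum_congr rfl
  intro n _
  rw [Finset.sum_mul]

lemma refl_sum (k : ℕ) (F : ℕ → ℕ → ℝ) :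
    ∑ i ∈ Finset.Icc 1 (k-1), F i (k-i) = ∑ i ∈ Finset.Icc 1 (k-1), F (k-i) i := by
  apply Finset.sum_bij' (fun i _ => k - i) (fun i _ => k - i)
  · intro i hi; rw [Finset.mem_Icc] at hi ⊢; omega
  · intro i hi; rw [Finset.mem_Icc] at hi ⊢; omega
  · intro i hi; rw [Finset.mem_Icc] at hi; omega
  · intro i hi; rw [Finset.mem_Icc] at hi; omega
  · intro i hi; rw [Finset.mem_Icc] at hi
    congr 1 <;> omega

lemma zpow_shift (i k : ℕ) (ξ : ℝ) (hξ : ξ ≠ 0) :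
    ξ ^ ((i:ℤ) - (k:ℤ) + 1) * ξ ^ (k:ℕ) = ξ ^ (i + 1) := by
  rw [← zpow_natCast ξ k, ← zpow_natCast ξ (i+1), ← zpow_add₀ hξ]
  congr 1
  push_cast
  ring

lemma zpow_shift0 (k : ℕ) (ξ : ℝ) (hξ : ξ ≠ 0) :
    ξ ^ (1 - (k:ℤ)) * ξ ^ (k:ℕ) = ξ := by
  rw [← zpow_natCast ξ k, ← zpow_add₀ hξ]
  simp
  
end EXT

section MAIN
variable {g : ℕ} {u : ℕ → (Fin g → ℝ) → ℝ}

lemma dAt (hu : ∀ i, ContDiff ℝ (⊤:ℕ∞) (u i)) (i : ℕ) (t : Fin g → ℝ) :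
    DifferentiableAt ℝ (u i) t := (diff_of_cd (hu i)) t

lemma pd_polyw (k : ℕ) {m : ℕ} {v : ℕ → (Fin g → ℝ) → ℝ}
    (hv : ∀ i, ContDiff ℝ (⊤:ℕ∞) (v i)) (w : ℕ → ℝ) (t : Fin g → ℝ) :
    pd k (fun s => ∑ i ∈ Finset.Icc 1 m, v i s * w i) t
      = ∑ i ∈ Finset.Icc 1 m, pd k (v i) t * w i := by
  rw [pd_sum k _ _ t (fun j _ => ((diff_of_cd (hv j)) t).mul_const (w j))]
  exact Finset.sum_congr rfl fun j _ => pd_mul_const k (w j) t ((diff_of_cd (hv j)) t)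

lemma Ei (hu : ∀ i, ContDiff ℝ (⊤:ℕ∞) (u i))
    (h4mu' : ∀ t, ∀ ξ : ℝ, ξ ≠ 0 →
      bfu3 u ξ t + 2 * pd 1 (u 1) t * (2 - bfu u ξ t)
        - 4 * (ξ⁻¹ + u 1 t) * bfu1 u ξ t = 0) :
    ∀ i, 1 ≤ i → i ≤ g → ∀ t,
      pd 1 (pd 1 (pd 1 (u i))) t = 2 * pd 1 (u 1) t * u i t + 4 * u 1 t * pd 1 (u i) t
        + (if i + 1 ≤ g then 4 * pd 1 (u (i+1)) t else 0) := by
  intro i hi1 hig t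
  set N := g + 2 with hN
  set a : ℕ → ℝ := fun n =>
    (if 1 + 1 ≤ n ∧ n ≤ g + 1 then pd 1 (pd 1 (pd 1 (u (n-1)))) t else 0)
    + (if n = 1 then 4 * pd 1 (u 1) t else 0)
    + (if 1 + 1 ≤ n ∧ n ≤ g + 1 then (-2) * pd 1 (u 1) t * u (n-1) t else 0)
    + (if 1 + 0 ≤ n ∧ n ≤ g + 0 then (-4) * pd 1 (u (n-0)) t else 0)
    + (if 1 + 1 ≤ n ∧ n ≤ g + 1 then (-4) * u 1 t * pd 1 (u (n-1)) t else 0) with ha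
  have key : ∀ ξ : ℝ, ξ ≠ 0 → ∑ n ∈ Finset.range N, a n * ξ ^ n = 0 := by
    intro ξ hξ
    have h := h4mu' t ξ hξ
    have expand : ∑ n ∈ Finset.range N, a n * ξ ^ n
        = (∑ j ∈ Finset.Icc 1 g, pd 1 (pd 1 (pd 1 (u j))) t * ξ ^ (j+1))
          + 4 * pd 1 (u 1) t * ξ ^ 1
          + (∑ j ∈ Finset.Icc 1 g, (-2) * pd 1 (u 1) t * u j t * ξ ^ (j+1))
          + (∑ j ∈ Finset.Icc 1 g, (-4) * pd 1 (u j) t * ξ ^ (j+0))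
          + (∑ j ∈ Finset.Icc 1 g, (-4) * u 1 t * pd 1 (u j) t * ξ ^ (j+1)) := by
      simp only [ha, add_mul, Finset.sum_add_distrib]
      rw [chunk N 1 g (by omega) (fun j => pd 1 (pd 1 (pd 1 (u j))) t) ξ]
      rw [single_chunk (show 1 < N by omega) (4 * pd 1 (u 1) t) ξ]
      rw [chunk N 1 g (by omega) (fun j => (-2) * pd 1 (u 1) t * u j t) ξ]
      rw [chunk N 0 g (by omega) (fun j => (-4) * pd 1 (u j) t) ξ]
      rw [chunk N 1 g (by omega) (fun j => (-4) * u 1 t * pd 1 (u j) t) ξ]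
    have e1 : ∑ j ∈ Finset.Icc 1 g, pd 1 (pd 1 (pd 1 (u j))) t * ξ ^ (j+1)
        = bfu3 u ξ t * ξ := by
      simp only [bfu3, Finset.sum_mul]
      exact Finset.sum_congr rfl fun j _ => by rw [pow_succ]; ring
    have e2 : ∑ j ∈ Finset.Icc 1 g, (-2) * pd 1 (u 1) t * u j t * ξ ^ (j+1)
        = (-2) * pd 1 (u 1) t * (bfu u ξ t * ξ) := by
      simp only [bfu, Finset.sum_mul, Finset.mul_sum]
      exact Finset.sum_congr rfl fun j _ => by rw [pow_succ]; ring
    have e3 : ∑ j ∈ Finset.Icc 1 g, (-4) * pd 1 (u j) t * ξ ^ (j+0)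
        = (-4) * bfu1 u ξ t := by
      simp only [bfu1, Finset.mul_sum]
      exact Finset.sum_congr rfl fun j _ => by ring
    have e4 : ∑ j ∈ Finset.Icc 1 g, (-4) * u 1 t * pd 1 (u j) t * ξ ^ (j+1)
        = (-4) * u 1 t * (bfu1 u ξ t * ξ) := by
      simp only [bfu1, Finset.sum_mul, Finset.mul_sum]
      exact Finset.sum_congr rfl fun j _ => by rw [pow_succ]; ring
    rw [expand, e1, e2, e3, e4]
    have goal2 : bfu3 u ξ t * ξ + 4 * pd 1 (u 1) t * ξ ^ 1
        + (-2) * pd 1 (u 1) t * (bfu u ξ t * ξ) + (-4) * bfu1 u ξ t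
        + (-4) * u 1 t * (bfu1 u ξ t * ξ)
        = ξ * (bfu3 u ξ t + 2 * pd 1 (u 1) t * (2 - bfu u ξ t)
            - 4 * (ξ⁻¹ + u 1 t) * bfu1 u ξ t) := by
      field_simp
      ring
    rw [goal2, h, mul_zero]
  have hco := poly_zero N a key (i+1) (by omega)
  rw [ha] at hco
  simp only [Nat.add_sub_cancel, Nat.sub_zero, Nat.add_zero] at hco
  have c1 : (1 + 1 ≤ i + 1 ∧ i + 1 ≤ g + 1) := by omega
  have c2 : ¬ (i + 1 = 1) := by omega
  rw [if_pos c1, if_pos c1, if_pos c1, if_neg c2] at hco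
  by_cases hig' : i + 1 ≤ g
  · rw [if_pos (show 1 ≤ i + 1 ∧ i + 1 ≤ g by omega)] at hco
    rw [if_pos hig']
    linarith
  · rw [if_neg (show ¬ (1 ≤ i + 1 ∧ i + 1 ≤ g) by omega)] at hco
    rw [if_neg hig']
    linarith

end MAIN

section MAIN2
variable {g : ℕ} {u : ℕ → (Fin g → ℝ) → ℝ}

lemma prod_expand {k m c : ℕ} (x y : ℕ → ℝ) {ξ : ℝ} (hξ : ξ ≠ 0) :
    (∑ i ∈ Finset.Icc 1 m, x i * ξ ^ ((i:ℤ) - (k:ℤ) + 1))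
      * (∑ j ∈ Finset.Icc 1 c, y j * ξ ^ j) * ξ ^ k
    = ∑ i ∈ Finset.Icc 1 m, ∑ j ∈ Finset.Icc 1 c, (x i * y j) * ξ ^ (i + j + 1) := by
  rw [Finset.sum_mul_sum, Finset.sum_mul]
  apply Finset.sum_congr rfl
  intro i _
  rw [Finset.sum_mul]
  apply Finset.sum_congr rfl
  intro j _
  have hz := zpow_shift i k ξ hξ
  calc x i * ξ ^ ((i:ℤ) - (k:ℤ) + 1) * (y j * ξ ^ j) * ξ ^ k
      = x i * y j * (ξ ^ ((i:ℤ) - (k:ℤ) + 1) * ξ ^ k) * ξ ^ j := by ring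
    _ = x i * y j * ξ ^ (i + 1) * ξ ^ j := by rw [hz]
    _ = x i * y j * ξ ^ (i + j + 1) := by
        rw [show i + j + 1 = (i + 1) + j by omega, pow_add]; ring

lemma sum_shift_z {k m : ℕ} (x : ℕ → ℝ) {ξ : ℝ} (hξ : ξ ≠ 0) :
    (∑ i ∈ Finset.Icc 1 m, x i * ξ ^ ((i:ℤ) - (k:ℤ) + 1)) * ξ ^ k
    = ∑ i ∈ Finset.Icc 1 m, x i * ξ ^ (i + 1) := by
  rw [Finset.sum_mul]
  apply Finset.sum_congr rfl
  intro i _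
  rw [mul_assoc, zpow_shift i k ξ hξ]

lemma L2 (hu : ∀ i, ContDiff ℝ (⊤:ℕ∞) (u i))
    (hdkq : ∀ k, 1 ≤ k → k ≤ g → ∀ t, ∀ ξ : ℝ, ξ ≠ 0 →
      pd k (bfu u ξ) t = DkA u k ξ t * bfu1 u ξ t - DkB u k ξ t * (2 - bfu u ξ t)) :
    ∀ k, 1 ≤ k → k ≤ g → ∀ t, pd k (u 1) t = pd 1 (u k) t := by
  intro k hk1 hkg t
  set N := 2*g + 2 with hN
  set a : ℕ → ℝ := fun n =>
    (if 1 + k ≤ n ∧ n ≤ g + k then pd k (u (n - k)) t else 0)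
    + (if 1 + 1 ≤ n ∧ n ≤ g + 1 then (-1) * pd 1 (u (n-1)) t else 0)
    + (∑ i ∈ Finset.Icc 1 (k-1),
        if 1 + (i+1) ≤ n ∧ n ≤ g + (i+1) then ((1/2) * u i t) * pd 1 (u (n - (i+1))) t else 0)
    + (if 1 + 1 ≤ n ∧ n ≤ (k-1) + 1 then pd 1 (u (n-1)) t else 0)
    + (∑ i ∈ Finset.Icc 1 (k-1),
        if 1 + (i+1) ≤ n ∧ n ≤ g + (i+1) then ((-(1/2)) * pd 1 (u i) t) * u (n - (i+1)) t else 0)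
    with ha
  have key : ∀ ξ : ℝ, ξ ≠ 0 → ∑ n ∈ Finset.range N, a n * ξ ^ n = 0 := by
    intro ξ hξ
    have h := hdkq k hk1 hkg t ξ hξ
    have expand : ∑ n ∈ Finset.range N, a n * ξ ^ n
        = (∑ i ∈ Finset.Icc 1 g, pd k (u i) t * ξ ^ (i + k))
        + (∑ j ∈ Finset.Icc 1 g, (-1) * pd 1 (u j) t * ξ ^ (j + 1))
        + (∑ i ∈ Finset.Icc 1 (k-1), ∑ j ∈ Finset.Icc 1 g,
            ((1/2) * u i t) * pd 1 (u j) t * ξ ^ (i + j + 1))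
        + (∑ i ∈ Finset.Icc 1 (k-1), pd 1 (u i) t * ξ ^ (i + 1))
        + (∑ i ∈ Finset.Icc 1 (k-1), ∑ j ∈ Finset.Icc 1 g,
            ((-(1/2)) * pd 1 (u i) t) * u j t * ξ ^ (i + j + 1)) := by
      simp only [ha, add_mul, Finset.sum_add_distrib]
      rw [chunk N k g (by omega) (fun i => pd k (u i) t) ξ]
      rw [chunk N 1 g (by omega) (fun j => (-1) * pd 1 (u j) t) ξ]
      rw [chunk2 N 1 (k-1) g (by omega) (fun i => (1/2) * u i t) (fun j => pd 1 (u j) t) ξ]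
      rw [chunk N 1 (k-1) (by omega) (fun i => pd 1 (u i) t) ξ]
      rw [chunk2 N 1 (k-1) g (by omega) (fun i => (-(1/2)) * pd 1 (u i) t) (fun j => u j t) ξ]
    rw [expand]
    -- closed forms
    have s1eq : ∑ i ∈ Finset.Icc 1 g, pd k (u i) t * ξ ^ (i + k)
        = pd k (bfu u ξ) t * ξ ^ k := by
      have hp : pd k (bfu u ξ) t = ∑ i ∈ Finset.Icc 1 g, pd k (u i) t * ξ ^ i :=
        pd_polyw k hu (fun i => ξ ^ i) t
      rw [hp, Finset.sum_mul]
      exact Finset.sum_congr rfl fun i _ => by rw [pow_add]; ring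
    have s2eq : ∑ j ∈ Finset.Icc 1 g, (-1) * pd 1 (u j) t * ξ ^ (j + 1)
        = -(bfu1 u ξ t * ξ) := by
      simp only [bfu1, Finset.sum_mul, ← Finset.sum_neg_distrib]
      exact Finset.sum_congr rfl fun j _ => by rw [pow_succ]; ring
    have T1 := prod_expand (k := k) (m := k-1) (c := g)
        (fun i => -(u i t)) (fun j => pd 1 (u j) t) hξ
    have T2 := prod_expand (k := k) (m := k-1) (c := g)
        (fun i => pd 1 (u i) t) (fun j => u j t) hξ
    have V4 := sum_shift_z (k := k) (m := k-1) (fun i => pd 1 (u i) t) hξ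
    have f2' : DkA u k ξ t * bfu1 u ξ t * ξ ^ k
        = bfu1 u ξ t * ξ
          + (1/2) * ∑ i ∈ Finset.Icc 1 (k-1), ∑ j ∈ Finset.Icc 1 g,
              (-(u i t) * pd 1 (u j) t) * ξ ^ (i + j + 1) := by
      rw [← T1]
      simp only [DkA, bfu1]
      have hz0 : ξ ^ (1 - (k:ℤ)) * ξ ^ (k:ℕ) = ξ := zpow_shift0 k ξ hξ
      calc (1/2 : ℝ) * (2 * ξ ^ (1 - (k:ℤ))
            + ∑ i ∈ Finset.Icc 1 (k-1), (-(u i t)) * ξ ^ ((i:ℤ) - (k:ℤ) + 1))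
            * (∑ j ∈ Finset.Icc 1 g, pd 1 (u j) t * ξ ^ j) * ξ ^ k
          = (∑ j ∈ Finset.Icc 1 g, pd 1 (u j) t * ξ ^ j) * (ξ ^ (1 - (k:ℤ)) * ξ ^ (k:ℕ))
            + (1/2) * ((∑ i ∈ Finset.Icc 1 (k-1), (-(u i t)) * ξ ^ ((i:ℤ) - (k:ℤ) + 1))
              * (∑ j ∈ Finset.Icc 1 g, pd 1 (u j) t * ξ ^ j) * ξ ^ k) := by ring
        _ = _ := by rw [hz0]
    have f3' : DkB u k ξ t * (2 - bfu u ξ t) * ξ ^ k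
        = (∑ i ∈ Finset.Icc 1 (k-1), pd 1 (u i) t * ξ ^ (i + 1))
          - (1/2) * ∑ i ∈ Finset.Icc 1 (k-1), ∑ j ∈ Finset.Icc 1 g,
              (pd 1 (u i) t * u j t) * ξ ^ (i + j + 1) := by
      rw [← T2, ← V4]
      simp only [DkB, bfu]
      ring
    have s3eq : ∑ i ∈ Finset.Icc 1 (k-1), ∑ j ∈ Finset.Icc 1 g,
          ((1/2) * u i t) * pd 1 (u j) t * ξ ^ (i + j + 1)
        = (-(1/2)) * ∑ i ∈ Finset.Icc 1 (k-1), ∑ j ∈ Finset.Icc 1 g,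
            (-(u i t) * pd 1 (u j) t) * ξ ^ (i + j + 1) := by
      rw [Finset.mul_sum]
      apply Finset.sum_congr rfl; intro i _
      rw [Finset.mul_sum]
      exact Finset.sum_congr rfl fun j _ => by ring
    have s5eq : ∑ i ∈ Finset.Icc 1 (k-1), ∑ j ∈ Finset.Icc 1 g,
          ((-(1/2)) * pd 1 (u i) t) * u j t * ξ ^ (i + j + 1)
        = (-(1/2)) * ∑ i ∈ Finset.Icc 1 (k-1), ∑ j ∈ Finset.Icc 1 g,
            (pd 1 (u i) t * u j t) * ξ ^ (i + j + 1) := by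
      rw [Finset.mul_sum]
      apply Finset.sum_congr rfl; intro i _
      rw [Finset.mul_sum]
      exact Finset.sum_congr rfl fun j _ => by ring
    rw [s1eq, s2eq, s3eq, s5eq]
    linear_combination (ξ ^ (k:ℕ)) * h + f2' - f3'
  have hco := poly_zero N a key (k+1) (by omega)
  rw [ha] at hco
  dsimp only at hco
  have c1 : 1 + k ≤ k + 1 ∧ k + 1 ≤ g + k := by omega
  have c2 : 1 + 1 ≤ k + 1 ∧ k + 1 ≤ g + 1 := by omega
  have c4 : ¬ (1 + 1 ≤ k + 1 ∧ k + 1 ≤ (k-1) + 1) := by omega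
  rw [if_pos c1, if_pos c2, if_neg c4] at hco
  have e1 : k + 1 - k = 1 := by omega
  have e2 : k + 1 - 1 = k := by omega
  rw [e1, e2] at hco
  have s3 : ∑ i ∈ Finset.Icc 1 (k-1),
        (if 1 + (i+1) ≤ k+1 ∧ k+1 ≤ g + (i+1) then ((1/2) * u i t) * pd 1 (u (k+1 - (i+1))) t else 0)
      = ∑ i ∈ Finset.Icc 1 (k-1), (1/2) * u i t * pd 1 (u (k - i)) t := by
    apply Finset.sum_congr rfl
    intro i hi
    rw [Finset.mem_Icc] at hi
    rw [if_pos (by omega), show k + 1 - (i+1) = k - i by omega]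
  have s5 : ∑ i ∈ Finset.Icc 1 (k-1),
        (if 1 + (i+1) ≤ k+1 ∧ k+1 ≤ g + (i+1) then ((-(1/2)) * pd 1 (u i) t) * u (k+1 - (i+1)) t else 0)
      = ∑ i ∈ Finset.Icc 1 (k-1), (-(1/2)) * pd 1 (u i) t * u (k - i) t := by
    apply Finset.sum_congr rfl
    intro i hi
    rw [Finset.mem_Icc] at hi
    rw [if_pos (by omega), show k + 1 - (i+1) = k - i by omega]
  rw [s3, s5] at hco
  have cancel : (∑ i ∈ Finset.Icc 1 (k-1), (1/2) * u i t * pd 1 (u (k - i)) t)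
      + (∑ i ∈ Finset.Icc 1 (k-1), (-(1/2)) * pd 1 (u i) t * u (k - i) t) = 0 := by
    rw [refl_sum k (fun i j => (1/2) * u i t * pd 1 (u j) t)]
    rw [← Finset.sum_add_distrib]
    apply Finset.sum_eq_zero
    intro i _
    ring
  linarith
end MAIN2


section STAR
variable {g : ℕ} {u : ℕ → (Fin g → ℝ) → ℝ}

lemma cd_sumw {m : ℕ} {v : ℕ → (Fin g → ℝ) → ℝ}
    (hv : ∀ i, ContDiff ℝ (⊤:ℕ∞) (v i)) (w : ℕ → ℝ) :
    ContDiff ℝ (⊤:ℕ∞) (fun t => ∑ i ∈ Finset.Icc 1 m, v i t * w i) :=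
  ContDiff.sum fun i _ => (hv i).mul contDiff_const

lemma cd_shape {m : ℕ} (c0 : ℝ) {v : ℕ → (Fin g → ℝ) → ℝ}
    (hv : ∀ i, ContDiff ℝ (⊤:ℕ∞) (v i)) (w : ℕ → ℝ) :
    ContDiff ℝ (⊤:ℕ∞) (fun t => (1/2:ℝ) * (c0 + ∑ i ∈ Finset.Icc 1 m, v i t * w i)) :=
  contDiff_const.mul (contDiff_const.add (cd_sumw hv w))

lemma pd1_shape {m : ℕ} (c0 : ℝ) (w : ℕ → ℝ) {v : ℕ → (Fin g → ℝ) → ℝ}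
    (hv : ∀ i, ContDiff ℝ (⊤:ℕ∞) (v i)) :
    pd 1 (fun t => (1/2:ℝ) * (c0 + ∑ i ∈ Finset.Icc 1 m, v i t * w i))
      = fun t => (1/2:ℝ) * (0 + ∑ i ∈ Finset.Icc 1 m, pd 1 (v i) t * w i) := by
  funext t
  have hsum : ContDiff ℝ (⊤:ℕ∞) (fun t => ∑ i ∈ Finset.Icc 1 m, v i t * w i) := cd_sumw hv w
  rw [pd_mul 1 t (differentiableAt_const _) ((diff_of_cd (contDiff_const.add hsum)) t),
    pd_const, pd_add 1 t (differentiableAt_const c0) ((diff_of_cd hsum) t), pd_const,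
    pd_polyw 1 hv w t]
  ring

lemma icc_split (k : ℕ) (hk : 1 ≤ k) (G : ℕ → ℝ) :
    ∑ i ∈ Finset.Icc 1 k, G i = ∑ i ∈ Finset.Icc 1 (k-1), G i + G k := by
  obtain ⟨m, rfl⟩ : ∃ m, k = m + 1 := ⟨k-1, by omega⟩
  rw [Finset.sum_Icc_succ_top (by omega)]
  simp

lemma icc_split_bot (k : ℕ) (hk : 1 ≤ k) (G : ℕ → ℝ) :
    ∑ i ∈ Finset.Icc 1 k, G i = G 1 + ∑ i ∈ Finset.Icc 2 k, G i := by
  have hins : Finset.Icc 1 k = insert 1 (Finset.Icc 2 k) := by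
    ext x; simp only [Finset.mem_Icc, Finset.mem_insert]; omega
  rw [hins, Finset.sum_insert (by simp [Finset.mem_Icc])]

lemma icc_shift (k : ℕ) (hk : 1 ≤ k) (G : ℕ → ℝ) :
    ∑ i ∈ Finset.Icc 1 (k-1), G (i+1) = ∑ j ∈ Finset.Icc 2 k, G j := by
  have hmap : Finset.Icc 2 k = (Finset.Icc 1 (k-1)).map (addLeftEmbedding 1) := by
    rw [Finset.map_add_left_Icc]; congr 1; omega
  rw [hmap, Finset.sum_map]
  apply Finset.sum_congr rfl
  intro i _
  simp only [addLeftEmbedding_apply]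
  rw [Nat.add_comm 1 i]

lemma star (hu : ∀ i, ContDiff ℝ (⊤:ℕ∞) (u i))
    (hE : ∀ i, 1 ≤ i → i ≤ g → ∀ t,
      pd 1 (pd 1 (pd 1 (u i))) t = 2 * pd 1 (u 1) t * u i t + 4 * u 1 t * pd 1 (u i) t
        + (if i + 1 ≤ g then 4 * pd 1 (u (i+1)) t else 0)) :
    ∀ k, 1 ≤ k → k ≤ g → ∀ t, ∀ ξ : ℝ, ξ ≠ 0 →
      pd 1 (pd 1 (pd 1 (DkA u k ξ))) t
        = 2 * pd 1 (u 1) t * DkA u k ξ t + 4 * (ξ⁻¹ + u 1 t) * pd 1 (DkA u k ξ) t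
          - 2 * pd 1 (u k) t := by
  intro k hk1 hkg t ξ hξ
  set w : ℕ → ℝ := fun i => ξ ^ ((i:ℤ) - (k:ℤ) + 1) with hw
  have hv1 : ∀ i, ContDiff ℝ (⊤:ℕ∞) (fun s => -(u i s)) := fun i => (hu i).neg
  have hv2 : ∀ i, ContDiff ℝ (⊤:ℕ∞) (pd 1 (fun s => -(u i s))) := fun i => contDiff_pd 1 (hv1 i)
  have hv3 : ∀ i, ContDiff ℝ (⊤:ℕ∞) (pd 1 (pd 1 (fun s => -(u i s)))) :=
    fun i => contDiff_pd 1 (hv2 i)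
  have hD0 : DkA u k ξ = fun t => (1/2:ℝ) * (2 * ξ ^ (1 - (k:ℤ))
      + ∑ i ∈ Finset.Icc 1 (k-1), (fun s => -(u i s)) t * w i) := rfl
  have hD1 : pd 1 (DkA u k ξ) = fun t => (1/2:ℝ)
      * (0 + ∑ i ∈ Finset.Icc 1 (k-1), pd 1 (fun s => -(u i s)) t * w i) := by
    rw [hD0]; exact pd1_shape _ w hv1
  have hD2 : pd 1 (pd 1 (DkA u k ξ)) = fun t => (1/2:ℝ)
      * (0 + ∑ i ∈ Finset.Icc 1 (k-1), pd 1 (pd 1 (fun s => -(u i s))) t * w i) := by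
    rw [hD1]; exact pd1_shape _ w hv2
  have hD3 : pd 1 (pd 1 (pd 1 (DkA u k ξ))) = fun t => (1/2:ℝ)
      * (0 + ∑ i ∈ Finset.Icc 1 (k-1), pd 1 (pd 1 (pd 1 (fun s => -(u i s)))) t * w i) := by
    rw [hD2]; exact pd1_shape _ w hv3
  -- pointwise negation chains
  have hneg1 : ∀ i (s : Fin g → ℝ), pd 1 (fun x => -(u i x)) s = -(pd 1 (u i) s) :=
    fun i s => pd_neg 1 s
  have hneg2 : ∀ i (s : Fin g → ℝ),
      pd 1 (pd 1 (fun x => -(u i x))) s = -(pd 1 (pd 1 (u i)) s) := by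
    intro i s
    have hfun : pd 1 (fun x => -(u i x)) = fun x => -(pd 1 (u i) x) := funext (hneg1 i)
    rw [hfun, pd_neg 1 s]
  have hneg3 : ∀ i (s : Fin g → ℝ),
      pd 1 (pd 1 (pd 1 (fun x => -(u i x)))) s = -(pd 1 (pd 1 (pd 1 (u i))) s) := by
    intro i s
    have hfun : pd 1 (pd 1 (fun x => -(u i x))) = fun x => -(pd 1 (pd 1 (u i)) x) :=
      funext (hneg2 i)
    rw [hfun, pd_neg 1 s]
  -- the sum after substituting hE
  have hEsum : ∑ i ∈ Finset.Icc 1 (k-1), pd 1 (pd 1 (pd 1 (fun s => -(u i s)))) t * w i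
      = ∑ i ∈ Finset.Icc 1 (k-1),
          (2 * pd 1 (u 1) t * (-(u i t)) + 4 * u 1 t * (-(pd 1 (u i) t))
            + (-4) * pd 1 (u (i+1)) t) * w i := by
    apply Finset.sum_congr rfl
    intro i hi
    rw [Finset.mem_Icc] at hi
    rw [hneg3 i t, hE i (by omega) (by omega) t, if_pos (by omega)]
    ring_nf
  -- atoms
  set P : ℝ := ∑ i ∈ Finset.Icc 1 (k-1), (-(u i t)) * w i with hP
  set Q : ℝ := ∑ i ∈ Finset.Icc 1 (k-1), (-(pd 1 (u i) t)) * w i with hQ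
  set R : ℝ := ∑ i ∈ Finset.Icc 1 (k-1), pd 1 (u (i+1)) t * w i with hR
  have hdec : ∑ i ∈ Finset.Icc 1 (k-1),
      (2 * pd 1 (u 1) t * (-(u i t)) + 4 * u 1 t * (-(pd 1 (u i) t))
        + (-4) * pd 1 (u (i+1)) t) * w i
      = 2 * pd 1 (u 1) t * P + 4 * u 1 t * Q + (-4) * R := by
    rw [hP, hQ, hR, Finset.mul_sum, Finset.mul_sum, Finset.mul_sum,
      ← Finset.sum_add_distrib, ← Finset.sum_add_distrib]
    apply Finset.sum_congr rfl
    intro i _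
    ring
  -- dagger identity
  have hdag : ξ⁻¹ * Q = -(pd 1 (u 1) t * ξ ^ (1 - (k:ℤ))) - R + pd 1 (u k) t := by
    set G : ℕ → ℝ := fun j => pd 1 (u j) t * ξ ^ ((j:ℤ) - (k:ℤ)) with hG
    have h1 : ∑ i ∈ Finset.Icc 1 k, G i = ∑ i ∈ Finset.Icc 1 (k-1), G i + G k :=
      icc_split k hk1 G
    have h2 : ∑ i ∈ Finset.Icc 1 k, G i = G 1 + ∑ i ∈ Finset.Icc 2 k, G i :=
      icc_split_bot k hk1 G
    have h3 : ∑ i ∈ Finset.Icc 1 (k-1), G (i+1) = ∑ j ∈ Finset.Icc 2 k, G j :=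
      icc_shift k hk1 G
    have h4 : ∑ i ∈ Finset.Icc 1 (k-1), G (i+1) = R := by
      rw [hR]
      apply Finset.sum_congr rfl
      intro i _
      simp only [hG, hw]
      rw [show ((i:ℕ)+1:ℕ) = ((i+1:ℕ)) from rfl]
      rw [show (((i+1:ℕ)):ℤ) = (i:ℤ) + 1 from by push_cast; ring]
      rw [show (i:ℤ) + 1 - (k:ℤ) = (i:ℤ) - (k:ℤ) + 1 from by ring]
    have h5 : ξ⁻¹ * Q = -∑ i ∈ Finset.Icc 1 (k-1), G i := by
      rw [hQ, Finset.mul_sum, ← Finset.sum_neg_distrib]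
      apply Finset.sum_congr rfl
      intro i _
      simp only [hw, hG]
      rw [show (i:ℤ) - (k:ℤ) + 1 = ((i:ℤ) - (k:ℤ)) + 1 from rfl, zpow_add_one₀ hξ]
      field_simp
    have hG1 : G 1 = pd 1 (u 1) t * ξ ^ (1 - (k:ℤ)) := by
      rw [hG]; norm_num
    have hGk : G k = pd 1 (u k) t := by
      rw [hG]; simp
    rw [h5]
    have : ∑ i ∈ Finset.Icc 1 (k-1), G i = G 1 + R - G k := by
      have := h1.symm.trans h2
      rw [← h4, h3]
      linarith
    rw [this, hG1, hGk]
    ring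
  -- final assembly
  rw [hD3, hD1]
  simp only [DkA]
  rw [hEsum, hdec]
  rw [show ∑ i ∈ Finset.Icc 1 (k-1), (-(u i t)) * ξ ^ ((i:ℤ) - (k:ℤ) + 1) = P from by rw [hP, hw]]
  rw [show ∑ i ∈ Finset.Icc 1 (k-1), pd 1 (fun s => -(u i s)) t * w i = Q from by
    rw [hQ]; exact Finset.sum_congr rfl fun i _ => by rw [hneg1 i t]]
  linear_combination (-2) * hdag

end STAR


section VANISH
variable {g : ℕ} {u : ℕ → (Fin g → ℝ) → ℝ}

lemma pd_const_mul (i : ℕ) {f : (Fin g → ℝ) → ℝ} (c : ℝ) (t : Fin g → ℝ)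
    (hf : DifferentiableAt ℝ f t) :
    pd i (fun s => c * f s) t = c * pd i f t := by
  by_cases hc : 1 ≤ i ∧ i ≤ g
  · rw [pd_apply hc, pd_apply hc, fderiv_const_mul hf]; simp
  · simp [pd, hc]

lemma cd_bfu (hu : ∀ i, ContDiff ℝ (⊤:ℕ∞) (u i)) (ξ : ℝ) :
    ContDiff ℝ (⊤:ℕ∞) (bfu u ξ) :=
  ContDiff.sum fun i _ => (hu i).mul contDiff_const

lemma cd_bfu1 (hu : ∀ i, ContDiff ℝ (⊤:ℕ∞) (u i)) (ξ : ℝ) :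
    ContDiff ℝ (⊤:ℕ∞) (bfu1 u ξ) :=
  ContDiff.sum fun i _ => (contDiff_pd 1 (hu i)).mul contDiff_const

lemma cd_bfu2 (hu : ∀ i, ContDiff ℝ (⊤:ℕ∞) (u i)) (ξ : ℝ) :
    ContDiff ℝ (⊤:ℕ∞) (bfu2 u ξ) :=
  ContDiff.sum fun i _ => (contDiff_pd 1 (contDiff_pd 1 (hu i))).mul contDiff_const

lemma cd_bfu3 (hu : ∀ i, ContDiff ℝ (⊤:ℕ∞) (u i)) (ξ : ℝ) :
    ContDiff ℝ (⊤:ℕ∞) (bfu3 u ξ) :=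
  ContDiff.sum fun i _ => (contDiff_pd 1 (contDiff_pd 1 (contDiff_pd 1 (hu i)))).mul contDiff_const

lemma cd_DkA (hu : ∀ i, ContDiff ℝ (⊤:ℕ∞) (u i)) (k : ℕ) (ξ : ℝ) :
    ContDiff ℝ (⊤:ℕ∞) (DkA u k ξ) :=
  contDiff_const.mul (contDiff_const.add
    (ContDiff.sum fun i _ => ((hu i).neg).mul contDiff_const))

lemma pd1_bfu (hu : ∀ i, ContDiff ℝ (⊤:ℕ∞) (u i)) (ξ : ℝ) :
    pd 1 (bfu u ξ) = bfu1 u ξ :=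
  funext fun t => pd_polyw 1 hu (fun i => ξ ^ i) t

lemma pd1_bfu1 (hu : ∀ i, ContDiff ℝ (⊤:ℕ∞) (u i)) (ξ : ℝ) :
    pd 1 (bfu1 u ξ) = bfu2 u ξ :=
  funext fun t => pd_polyw 1 (fun i => contDiff_pd 1 (hu i)) (fun i => ξ ^ i) t

lemma pd1_bfu2 (hu : ∀ i, ContDiff ℝ (⊤:ℕ∞) (u i)) (ξ : ℝ) :
    pd 1 (bfu2 u ξ) = bfu3 u ξ :=
  funext fun t => pd_polyw 1 (fun i => contDiff_pd 1 (contDiff_pd 1 (hu i))) (fun i => ξ ^ i) t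

lemma pd1_DkA_eq (hu : ∀ i, ContDiff ℝ (⊤:ℕ∞) (u i)) (k : ℕ) (ξ : ℝ) (t : Fin g → ℝ) :
    pd 1 (DkA u k ξ) t = -(DkB u k ξ t) := by
  have h := congrFun (pd1_shape (m := k-1) (2 * ξ ^ (1 - (k:ℤ)))
    (fun i => ξ ^ ((i:ℤ) - (k:ℤ) + 1)) (fun i => (hu i).neg)) t
  rw [show pd 1 (DkA u k ξ) t = pd 1 (fun t => (1/2:ℝ) * (2 * ξ ^ (1 - (k:ℤ))
      + ∑ i ∈ Finset.Icc 1 (k-1), (fun s => -(u i s)) t * ξ ^ ((i:ℤ) - (k:ℤ) + 1))) t from rfl]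
  rw [h]
  simp only [DkB, zero_add]
  rw [Finset.mul_sum, Finset.mul_sum, ← Finset.sum_neg_distrib]
  apply Finset.sum_congr rfl
  intro i _
  rw [pd_neg 1 t]
  ring

-- C5 as a function identity
lemma C5fun (hu : ∀ i, ContDiff ℝ (⊤:ℕ∞) (u i))
    (hdkq : ∀ k, 1 ≤ k → k ≤ g → ∀ t, ∀ ξ : ℝ, ξ ≠ 0 →
      pd k (bfu u ξ) t = DkA u k ξ t * bfu1 u ξ t - DkB u k ξ t * (2 - bfu u ξ t))
    (k : ℕ) (hk1 : 1 ≤ k) (hkg : k ≤ g) {ξ : ℝ} (hξ : ξ ≠ 0) :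
    pd k (bfu u ξ) = fun t => DkA u k ξ t * bfu1 u ξ t
      + pd 1 (DkA u k ξ) t * (2 - bfu u ξ t) := by
  funext t
  rw [hdkq k hk1 hkg t ξ hξ, pd1_DkA_eq hu k ξ t]
  ring

lemma C6fun (hu : ∀ i, ContDiff ℝ (⊤:ℕ∞) (u i))
    (hdkq : ∀ k, 1 ≤ k → k ≤ g → ∀ t, ∀ ξ : ℝ, ξ ≠ 0 →
      pd k (bfu u ξ) t = DkA u k ξ t * bfu1 u ξ t - DkB u k ξ t * (2 - bfu u ξ t))
    (k : ℕ) (hk1 : 1 ≤ k) (hkg : k ≤ g) {ξ : ℝ} (hξ : ξ ≠ 0) :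
    pd k (bfu1 u ξ) = fun t => DkA u k ξ t * bfu2 u ξ t
      + pd 1 (pd 1 (DkA u k ξ)) t * (2 - bfu u ξ t) := by
  funext t
  have h1 : pd k (bfu1 u ξ) t = pd 1 (pd k (bfu u ξ)) t := by
    rw [← pd1_bfu hu ξ, pd_comm k 1 (cd_bfu hu ξ) t]
  rw [h1, C5fun hu hdkq k hk1 hkg hξ]
  have dA : DifferentiableAt ℝ (DkA u k ξ) t := (diff_of_cd (cd_DkA hu k ξ)) t
  have dA1 : DifferentiableAt ℝ (pd 1 (DkA u k ξ)) t :=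
    (diff_of_cd (contDiff_pd 1 (cd_DkA hu k ξ))) t
  have dU : DifferentiableAt ℝ (bfu u ξ) t := (diff_of_cd (cd_bfu hu ξ)) t
  have dU1 : DifferentiableAt ℝ (bfu1 u ξ) t := (diff_of_cd (cd_bfu1 hu ξ)) t
  have dQ : DifferentiableAt ℝ (fun s => 2 - bfu u ξ s) t :=
    (differentiableAt_const 2).sub dU
  rw [pd_add 1 t (dA.fun_mul dU1) (dA1.fun_mul dQ), pd_mul 1 t dA dU1, pd_mul 1 t dA1 dQ,
    pd_sub 1 t (differentiableAt_const 2) dU, pd_const,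
    congrFun (pd1_bfu1 hu ξ) t, congrFun (pd1_bfu hu ξ) t]
  ring

lemma C7fun (hu : ∀ i, ContDiff ℝ (⊤:ℕ∞) (u i))
    (hdkq : ∀ k, 1 ≤ k → k ≤ g → ∀ t, ∀ ξ : ℝ, ξ ≠ 0 →
      pd k (bfu u ξ) t = DkA u k ξ t * bfu1 u ξ t - DkB u k ξ t * (2 - bfu u ξ t))
    (k : ℕ) (hk1 : 1 ≤ k) (hkg : k ≤ g) {ξ : ℝ} (hξ : ξ ≠ 0) (t : Fin g → ℝ) :
    pd k (bfu2 u ξ) t = pd 1 (DkA u k ξ) t * bfu2 u ξ t + DkA u k ξ t * bfu3 u ξ t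
      + pd 1 (pd 1 (pd 1 (DkA u k ξ))) t * (2 - bfu u ξ t)
      - pd 1 (pd 1 (DkA u k ξ)) t * bfu1 u ξ t := by
  have h1 : pd k (bfu2 u ξ) t = pd 1 (pd k (bfu1 u ξ)) t := by
    rw [← pd1_bfu1 hu ξ, pd_comm k 1 (cd_bfu1 hu ξ) t]
  rw [h1, C6fun hu hdkq k hk1 hkg hξ]
  have dA : DifferentiableAt ℝ (DkA u k ξ) t := (diff_of_cd (cd_DkA hu k ξ)) t
  have dA2 : DifferentiableAt ℝ (pd 1 (pd 1 (DkA u k ξ))) t :=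
    (diff_of_cd (contDiff_pd 1 (contDiff_pd 1 (cd_DkA hu k ξ)))) t
  have dU : DifferentiableAt ℝ (bfu u ξ) t := (diff_of_cd (cd_bfu hu ξ)) t
  have dU2 : DifferentiableAt ℝ (bfu2 u ξ) t := (diff_of_cd (cd_bfu2 hu ξ)) t
  have dQ : DifferentiableAt ℝ (fun s => 2 - bfu u ξ s) t :=
    (differentiableAt_const 2).sub dU
  rw [pd_add 1 t (dA.fun_mul dU2) (dA2.fun_mul dQ), pd_mul 1 t dA dU2, pd_mul 1 t dA2 dQ,
    pd_sub 1 t (differentiableAt_const 2) dU, pd_const,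
    congrFun (pd1_bfu2 hu ξ) t, congrFun (pd1_bfu hu ξ) t]
  ring

lemma vanish (hg : 1 ≤ g) (hu : ∀ i, ContDiff ℝ (⊤:ℕ∞) (u i))
    (h4mu' : ∀ t, ∀ ξ : ℝ, ξ ≠ 0 →
      bfu3 u ξ t + 2 * pd 1 (u 1) t * (2 - bfu u ξ t)
        - 4 * (ξ⁻¹ + u 1 t) * bfu1 u ξ t = 0)
    (hdkq : ∀ k, 1 ≤ k → k ≤ g → ∀ t, ∀ ξ : ℝ, ξ ≠ 0 →
      pd k (bfu u ξ) t = DkA u k ξ t * bfu1 u ξ t - DkB u k ξ t * (2 - bfu u ξ t)) :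
    ∀ j, 1 ≤ j → j ≤ g → ∀ ξ : ℝ, ξ ≠ 0 → ∀ t,
      pd j (fun s => bfu1 u ξ s ^ 2 + 2 * bfu2 u ξ s * (2 - bfu u ξ s)
        + 4 * (ξ⁻¹ + u 1 s) * (2 - bfu u ξ s) ^ 2) t = 0 := by
  intro j hj1 hjg ξ hξ t
  have hE := Ei hu h4mu'
  have hL2 := L2 hu hdkq j hj1 hjg t
  have hstar := star hu hE j hj1 hjg t ξ hξ
  have h4 := h4mu' t ξ hξ
  have hC5 := congrFun (C5fun hu hdkq j hj1 hjg hξ) t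
  have hC6 := congrFun (C6fun hu hdkq j hj1 hjg hξ) t
  have hC7 := C7fun hu hdkq j hj1 hjg hξ t
  -- differentiability facts
  have dA : DifferentiableAt ℝ (DkA u j ξ) t := (diff_of_cd (cd_DkA hu j ξ)) t
  have dU : DifferentiableAt ℝ (bfu u ξ) t := (diff_of_cd (cd_bfu hu ξ)) t
  have dU1 : DifferentiableAt ℝ (bfu1 u ξ) t := (diff_of_cd (cd_bfu1 hu ξ)) t
  have dU2 : DifferentiableAt ℝ (bfu2 u ξ) t := (diff_of_cd (cd_bfu2 hu ξ)) t
  have du1 : DifferentiableAt ℝ (u 1) t := (diff_of_cd (hu 1)) t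
  have dQ : DifferentiableAt ℝ (fun s => 2 - bfu u ξ s) t :=
    (differentiableAt_const 2).sub dU
  have dQ2 : DifferentiableAt ℝ (fun s => (2 - bfu u ξ s) * (2 - bfu u ξ s)) t := dQ.mul dQ
  have dc : DifferentiableAt ℝ (fun s => ξ⁻¹ + u 1 s) t :=
    (differentiableAt_const _).add du1
  have dc4 : DifferentiableAt ℝ (fun s => 4 * (ξ⁻¹ + u 1 s)) t :=
    (differentiableAt_const (4:ℝ)).mul dc
  have dX : DifferentiableAt ℝ (fun s => bfu1 u ξ s * bfu1 u ξ s) t := dU1.mul dU1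
  have dB2 : DifferentiableAt ℝ (fun s => 2 * bfu2 u ξ s) t :=
    (differentiableAt_const (2:ℝ)).mul dU2
  have dY : DifferentiableAt ℝ (fun s => 2 * bfu2 u ξ s * (2 - bfu u ξ s)) t := dB2.mul dQ
  have dZ : DifferentiableAt ℝ (fun s => (4 * (ξ⁻¹ + u 1 s)) * ((2 - bfu u ξ s) * (2 - bfu u ξ s))) t :=
    dc4.mul dQ2
  -- rewrite the function into product form
  have hfun : (fun s => bfu1 u ξ s ^ 2 + 2 * bfu2 u ξ s * (2 - bfu u ξ s)
        + 4 * (ξ⁻¹ + u 1 s) * (2 - bfu u ξ s) ^ 2)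
      = (fun s => (bfu1 u ξ s * bfu1 u ξ s + 2 * bfu2 u ξ s * (2 - bfu u ξ s))
        + (4 * (ξ⁻¹ + u 1 s)) * ((2 - bfu u ξ s) * (2 - bfu u ξ s))) := by
    funext s; ring
  rw [hfun]
  rw [pd_add j t (dX.fun_add dY) dZ, pd_add j t dX dY,
    pd_mul j t dU1 dU1,
    pd_mul j t dB2 dQ, pd_const_mul j 2 t dU2,
    pd_mul j t dc4 dQ2, pd_const_mul j 4 t dc,
    pd_add j t (differentiableAt_const _) du1, pd_const,
    pd_mul j t dQ dQ,
    pd_sub j t (differentiableAt_const 2) dU, pd_const]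
  rw [hC5, hC6, hC7, hL2]
  -- substitute U3 and a3
  have hU3 : bfu3 u ξ t = -2 * pd 1 (u 1) t * (2 - bfu u ξ t)
      + 4 * (ξ⁻¹ + u 1 t) * bfu1 u ξ t := by linarith
  rw [hstar, hU3]
  ring

end VANISH


section FINAL
variable {g : ℕ} {u : ℕ → (Fin g → ℝ) → ℝ}

lemma dchunk {b c : ℕ} (s : ℕ) (C : ℝ) (x y : ℕ → ℝ) (ξ : ℝ) :
    ∑ i ∈ Finset.Icc 1 b, ∑ j ∈ Finset.Icc 1 c, (C * x i) * y j * ξ ^ (i + j + s)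
      = C * (∑ i ∈ Finset.Icc 1 b, x i * ξ ^ i) * (∑ j ∈ Finset.Icc 1 c, y j * ξ ^ j) * ξ ^ s := by
  rw [show C * (∑ i ∈ Finset.Icc 1 b, x i * ξ ^ i) * (∑ j ∈ Finset.Icc 1 c, y j * ξ ^ j) * ξ ^ s
      = (∑ i ∈ Finset.Icc 1 b, x i * ξ ^ i) * (∑ j ∈ Finset.Icc 1 c, y j * ξ ^ j) * (C * ξ ^ s)
      from by ring]
  rw [Finset.sum_mul_sum, Finset.sum_mul]
  apply Finset.sum_congr rfl
  intro i _
  rw [Finset.sum_mul]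
  apply Finset.sum_congr rfl
  intro j _
  rw [pow_add, pow_add]
  ring

lemma schunk {b : ℕ} (s : ℕ) (C : ℝ) (x : ℕ → ℝ) (ξ : ℝ) :
    ∑ i ∈ Finset.Icc 1 b, (C * x i) * ξ ^ (i + s)
      = C * (∑ i ∈ Finset.Icc 1 b, x i * ξ ^ i) * ξ ^ s := by
  rw [Finset.mul_sum, Finset.sum_mul]
  apply Finset.sum_congr rfl
  intro i _
  rw [pow_add]
  ring

lemma FapplyConst (hg : 1 ≤ g) (hu : ∀ i, ContDiff ℝ (⊤:ℕ∞) (u i))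
    (h4mu' : ∀ t, ∀ ξ : ℝ, ξ ≠ 0 →
      bfu3 u ξ t + 2 * pd 1 (u 1) t * (2 - bfu u ξ t)
        - 4 * (ξ⁻¹ + u 1 t) * bfu1 u ξ t = 0)
    (hdkq : ∀ k, 1 ≤ k → k ≤ g → ∀ t, ∀ ξ : ℝ, ξ ≠ 0 →
      pd k (bfu u ξ) t = DkA u k ξ t * bfu1 u ξ t - DkB u k ξ t * (2 - bfu u ξ t))
    {ξ : ℝ} (hξ : ξ ≠ 0) (t t' : Fin g → ℝ) :
    (fun s => bfu1 u ξ s ^ 2 + 2 * bfu2 u ξ s * (2 - bfu u ξ s)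
        + 4 * (ξ⁻¹ + u 1 s) * (2 - bfu u ξ s) ^ 2) t
      = (fun s => bfu1 u ξ s ^ 2 + 2 * bfu2 u ξ s * (2 - bfu u ξ s)
        + 4 * (ξ⁻¹ + u 1 s) * (2 - bfu u ξ s) ^ 2) t' := by
  set F : (Fin g → ℝ) → ℝ := fun s => bfu1 u ξ s ^ 2 + 2 * bfu2 u ξ s * (2 - bfu u ξ s)
        + 4 * (ξ⁻¹ + u 1 s) * (2 - bfu u ξ s) ^ 2 with hF
  have hcd : ContDiff ℝ (⊤:ℕ∞) F := by
    rw [hF]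
    exact (((cd_bfu1 hu ξ).pow 2).add
        ((contDiff_const.mul (cd_bfu2 hu ξ)).mul (contDiff_const.sub (cd_bfu hu ξ)))).add
      ((contDiff_const.mul (contDiff_const.add (hu 1))).mul
        ((contDiff_const.sub (cd_bfu hu ξ)).pow 2))
  have hvan := vanish hg hu h4mu' hdkq
  have hzero : ∀ s, fderiv ℝ F s = 0 := by
    intro s
    apply ContinuousLinearMap.ext
    intro v
    have hv : v = ∑ b : Fin g, v b • (Pi.single b 1 : Fin g → ℝ) := by
      funext j
      rw [Finset.sum_apply]
      simp only [Pi.smul_apply, Pi.single_apply, smul_eq_mul]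
      rw [Finset.sum_congr rfl (fun b _ => by rw [mul_ite, mul_one, mul_zero])]
      simp [Finset.sum_ite_eq]
    rw [hv, map_sum]
    simp only [map_smul]
    rw [show (0 : (Fin g → ℝ) →L[ℝ] ℝ) (∑ b : Fin g, v b • (Pi.single b 1 : Fin g → ℝ)) = 0 from rfl]
    apply Finset.sum_eq_zero
    intro b _
    have hb : fderiv ℝ F s (Pi.single b (1:ℝ)) = 0 := by
      have hcond : 1 ≤ (b:ℕ)+1 ∧ (b:ℕ)+1 ≤ g := ⟨by omega, by omega⟩
      have := hvan ((b:ℕ)+1) hcond.1 hcond.2 ξ hξ s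
      rw [pd_apply hcond] at this
      rw [show (⟨(b:ℕ)+1-1, by omega⟩ : Fin g) = b from by
        apply Fin.ext; simp] at this
      exact this
    rw [hb, smul_zero]
  exact is_const_of_fderiv_eq_zero (hcd.differentiable (by simp)) hzero t t'

end FINAL


section MU
variable {g : ℕ} {u : ℕ → (Fin g → ℝ) → ℝ}

lemma hdz (b c s n : ℕ) (hn : n ≤ s + 1) (h : ℕ → ℝ) :
    ∑ i ∈ Finset.Icc 1 b, (if 1+(i+s) ≤ n ∧ n ≤ c+(i+s) then h i else 0) = 0 :=
  Finset.sum_eq_zero fun i hi => if_neg (by rw [Finset.mem_Icc] at hi; omega)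

lemma mu_exists (hg : 1 ≤ g) (hu : ∀ i, ContDiff ℝ (⊤:ℕ∞) (u i))
    (h4mu' : ∀ t, ∀ ξ : ℝ, ξ ≠ 0 →
      bfu3 u ξ t + 2 * pd 1 (u 1) t * (2 - bfu u ξ t)
        - 4 * (ξ⁻¹ + u 1 t) * bfu1 u ξ t = 0)
    (hdkq : ∀ k, 1 ≤ k → k ≤ g → ∀ t, ∀ ξ : ℝ, ξ ≠ 0 →
      pd k (bfu u ξ) t = DkA u k ξ t * bfu1 u ξ t - DkB u k ξ t * (2 - bfu u ξ t)) :
    ∃ μ : ℕ → ℝ, ∀ t, ∀ ξ : ℝ, ξ ≠ 0 →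
        bfu1 u ξ t ^ 2 + 2 * bfu2 u ξ t * (2 - bfu u ξ t)
          + 4 * (ξ⁻¹ + u 1 t) * (2 - bfu u ξ t) ^ 2
        = 16 * ξ⁻¹ + 4 * ∑ i ∈ Finset.Icc 1 (2*g), μ i * ξ ^ i := by
  set t0 : Fin g → ℝ := 0 with ht0
  set N := 2*g + 2 with hN
  set m : ℕ → ℝ := fun n =>
    (∑ i ∈ Finset.Icc 1 g, if 1+(i+1) ≤ n ∧ n ≤ g+(i+1)
        then ((1:ℝ) * pd 1 (u i) t0) * pd 1 (u (n-(i+1))) t0 else 0)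
    + (if 1+1 ≤ n ∧ n ≤ g+1 then ((4:ℝ) * pd 1 (pd 1 (u (n-1))) t0) else 0)
    + (∑ i ∈ Finset.Icc 1 g, if 1+(i+1) ≤ n ∧ n ≤ g+(i+1)
        then (((-2):ℝ) * pd 1 (pd 1 (u i)) t0) * u (n-(i+1)) t0 else 0)
    + (if n = 0 then (16:ℝ) else 0)
    + (if 1+0 ≤ n ∧ n ≤ g+0 then ((-16):ℝ) * u (n-0) t0 else 0)
    + (∑ i ∈ Finset.Icc 1 g, if 1+(i+0) ≤ n ∧ n ≤ g+(i+0)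
        then ((4:ℝ) * u i t0) * u (n-(i+0)) t0 else 0)
    + (if n = 1 then 16 * u 1 t0 else 0)
    + (if 1+1 ≤ n ∧ n ≤ g+1 then ((-16) * u 1 t0) * u (n-1) t0 else 0)
    + (∑ i ∈ Finset.Icc 1 g, if 1+(i+1) ≤ n ∧ n ≤ g+(i+1)
        then ((4 * u 1 t0) * u i t0) * u (n-(i+1)) t0 else 0)
    with hm
  have mkey : ∀ ξ : ℝ, ξ ≠ 0 → ∑ n ∈ Finset.range N, m n * ξ ^ n
      = ξ * (bfu1 u ξ t0 ^ 2 + 2 * bfu2 u ξ t0 * (2 - bfu u ξ t0)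
        + 4 * (ξ⁻¹ + u 1 t0) * (2 - bfu u ξ t0) ^ 2) := by
    intro ξ hξ
    have expand : ∑ n ∈ Finset.range N, m n * ξ ^ n
        = (∑ i ∈ Finset.Icc 1 g, ∑ j ∈ Finset.Icc 1 g,
            ((1:ℝ) * pd 1 (u i) t0) * pd 1 (u j) t0 * ξ ^ (i+j+1))
        + (∑ j ∈ Finset.Icc 1 g, ((4:ℝ) * pd 1 (pd 1 (u j)) t0) * ξ ^ (j+1))
        + (∑ i ∈ Finset.Icc 1 g, ∑ j ∈ Finset.Icc 1 g,
            (((-2):ℝ) * pd 1 (pd 1 (u i)) t0) * u j t0 * ξ ^ (i+j+1))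
        + (16:ℝ) * ξ ^ 0
        + (∑ j ∈ Finset.Icc 1 g, ((-16):ℝ) * u j t0 * ξ ^ (j+0))
        + (∑ i ∈ Finset.Icc 1 g, ∑ j ∈ Finset.Icc 1 g,
            ((4:ℝ) * u i t0) * u j t0 * ξ ^ (i+j+0))
        + (16 * u 1 t0) * ξ ^ 1
        + (∑ j ∈ Finset.Icc 1 g, ((-16) * u 1 t0) * u j t0 * ξ ^ (j+1))
        + (∑ i ∈ Finset.Icc 1 g, ∑ j ∈ Finset.Icc 1 g,
            ((4 * u 1 t0) * u i t0) * u j t0 * ξ ^ (i+j+1)) := by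
      simp only [hm, add_mul, Finset.sum_add_distrib]
      rw [chunk2 N 1 g g (by omega) (fun i => (1:ℝ) * pd 1 (u i) t0)
          (fun j => pd 1 (u j) t0) ξ]
      rw [chunk N 1 g (by omega) (fun j => (4:ℝ) * pd 1 (pd 1 (u j)) t0) ξ]
      rw [chunk2 N 1 g g (by omega) (fun i => ((-2):ℝ) * pd 1 (pd 1 (u i)) t0)
          (fun j => u j t0) ξ]
      rw [single_chunk (show 0 < N by omega) (16:ℝ) ξ]
      rw [chunk N 0 g (by omega) (fun j => ((-16):ℝ) * u j t0) ξ]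
      rw [chunk2 N 0 g g (by omega) (fun i => (4:ℝ) * u i t0) (fun j => u j t0) ξ]
      rw [single_chunk (show 1 < N by omega) (16 * u 1 t0) ξ]
      rw [chunk N 1 g (by omega) (fun j => ((-16) * u 1 t0) * u j t0) ξ]
      rw [chunk2 N 1 g g (by omega) (fun i => (4 * u 1 t0) * u i t0) (fun j => u j t0) ξ]
    rw [expand]
    rw [dchunk 1 (1:ℝ) (fun i => pd 1 (u i) t0) (fun j => pd 1 (u j) t0) ξ]
    rw [schunk 1 (4:ℝ) (fun j => pd 1 (pd 1 (u j)) t0) ξ]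
    rw [dchunk 1 ((-2):ℝ) (fun i => pd 1 (pd 1 (u i)) t0) (fun j => u j t0) ξ]
    rw [schunk 0 ((-16):ℝ) (fun j => u j t0) ξ]
    rw [dchunk 0 (4:ℝ) (fun i => u i t0) (fun j => u j t0) ξ]
    rw [schunk 1 ((-16) * u 1 t0) (fun j => u j t0) ξ]
    rw [dchunk 1 (4 * u 1 t0) (fun i => u i t0) (fun j => u j t0) ξ]
    simp only [bfu, bfu1, bfu2]
    field_simp
    ring
  have hm0 : m 0 = 16 := by
    rw [hm]
    dsimp only
    rw [hdz g g 1 0 (by omega), hdz g g 1 0 (by omega), hdz g g 0 0 (by omega),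
      hdz g g 1 0 (by omega)]
    norm_num
  have hm1 : m 1 = 0 := by
    rw [hm]
    dsimp only
    rw [hdz g g 1 1 (by omega), hdz g g 1 1 (by omega), hdz g g 0 1 (by omega),
      hdz g g 1 1 (by omega)]
    rw [if_neg (show ¬(1+1 ≤ 1 ∧ 1 ≤ g+1) by omega),
      if_neg (show ¬((1:ℕ) = 0) by omega),
      if_pos (show 1+0 ≤ 1 ∧ 1 ≤ g+0 by omega),
      if_pos (rfl : (1:ℕ) = 1),
      if_neg (show ¬(1+1 ≤ 1 ∧ 1 ≤ g+1) by omega)]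
    norm_num
  refine ⟨fun i => m (i+1) / 4, ?_⟩
  intro t ξ hξ
  have hconst := FapplyConst hg hu h4mu' hdkq hξ t t0
  dsimp only at hconst
  have hkey := mkey ξ hξ
  have hsplit : ∑ n ∈ Finset.range N, m n * ξ ^ n
      = m 0 * ξ ^ 0 + m 1 * ξ ^ 1 + ∑ i ∈ Finset.Icc 1 (2*g), m (i+1) * ξ ^ (i+1) := by
    have hset : Finset.range N = insert 0 (insert 1 (Finset.Icc 2 (2*g+1))) := by
      ext x
      simp only [Finset.mem_range, Finset.mem_insert, Finset.mem_Icc, hN]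
      omega
    have h0 : (0:ℕ) ∉ insert 1 (Finset.Icc 2 (2*g+1)) := by
      simp [Finset.mem_insert, Finset.mem_Icc]
    have h1 : (1:ℕ) ∉ Finset.Icc 2 (2*g+1) := by
      simp [Finset.mem_Icc]
    have hmap : Finset.Icc 2 (2*g+1) = (Finset.Icc 1 (2*g)).map (addLeftEmbedding 1) := by
      rw [Finset.map_add_left_Icc]
      congr 1 <;> omega
    rw [hset, Finset.sum_insert h0, Finset.sum_insert h1, hmap, Finset.sum_map]
    have hcg : ∀ i ∈ Finset.Icc 1 (2*g),
        m (addLeftEmbedding 1 i) * ξ ^ (addLeftEmbedding 1 i) = m (i+1) * ξ ^ (i+1) :=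
      fun i _ => by simp only [addLeftEmbedding_apply]; rw [Nat.add_comm 1 i]
    rw [Finset.sum_congr rfl hcg]
    ring
  apply mul_left_cancel₀ hξ
  rw [hconst, ← hkey, hsplit, hm0, hm1]
  have hterm : ∀ i ∈ Finset.Icc 1 (2*g),
      m (i+1) * ξ ^ (i+1) = ξ * (4 * (m (i+1) / 4 * ξ ^ i)) :=
    fun i _ => by rw [pow_succ]; field_simp
  rw [Finset.sum_congr rfl hterm, ← Finset.mul_sum, ← Finset.mul_sum]
  field_simp
  ring
end MU

/-- Assume equations (4mu′) and (dkq). Then there exist real constants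
`μ_1, …, μ_{2g}` such that for all `t` and all real `ξ ≠ 0`:
`𝐮'(ξ)² + 2𝐮''(ξ)(2 − 𝐮(ξ)) + 4(ξ⁻¹ + u_1)(2 − 𝐮(ξ))² = 16ξ⁻¹ + 4∑_{i=1}^{2g} μ_i ξ^i`;
equivalently, every `t`-partial derivative `∂_j` (`j = 1, …, g`) of the left-hand side
vanishes identically for every fixed `ξ ≠ 0`. -/
theorem statement4 (g : ℕ) (hg : 1 ≤ g) (u : ℕ → (Fin g → ℝ) → ℝ)
    (hu : ∀ i, ContDiff ℝ (⊤ : ℕ∞) (u i))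
    (h4mu' : ∀ t, ∀ ξ : ℝ, ξ ≠ 0 →
      bfu3 u ξ t + 2 * pd 1 (u 1) t * (2 - bfu u ξ t)
        - 4 * (ξ⁻¹ + u 1 t) * bfu1 u ξ t = 0)
    (hdkq : ∀ k, 1 ≤ k → k ≤ g → ∀ t, ∀ ξ : ℝ, ξ ≠ 0 →
      pd k (bfu u ξ) t = DkA u k ξ t * bfu1 u ξ t - DkB u k ξ t * (2 - bfu u ξ t)) :
    (∃ μ : ℕ → ℝ, ∀ t, ∀ ξ : ℝ, ξ ≠ 0 →
        bfu1 u ξ t ^ 2 + 2 * bfu2 u ξ t * (2 - bfu u ξ t)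
          + 4 * (ξ⁻¹ + u 1 t) * (2 - bfu u ξ t) ^ 2
        = 16 * ξ⁻¹ + 4 * ∑ i ∈ Finset.Icc 1 (2*g), μ i * ξ ^ i)
    ∧ (∀ j, 1 ≤ j → j ≤ g → ∀ ξ : ℝ, ξ ≠ 0 → ∀ t,
        pd j (fun s => bfu1 u ξ s ^ 2 + 2 * bfu2 u ξ s * (2 - bfu u ξ s)
          + 4 * (ξ⁻¹ + u 1 s) * (2 - bfu u ξ s) ^ 2) t = 0) := by
  constructor
  · exact mu_exists hg hu h4mu' hdkq
  · intro j hj1 hjg ξ hξ t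
    exact vanish hg hu h4mu' hdkq j hj1 hjg ξ hξ t
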